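/- (Karush–Kuhn–Tucker form.) Under the hypotheses of the John-type theorem, if additionally there exists w ∈ E such that D^-_M f_i(x̂)(w) > 0 for every i ∈ {1,…,m} with f_i(x̂) = 0 (Slater-type condition), then the multipliers can be chosen with λ^0 = 1: there exist λ^1,…,λ^m ≥ 0 with λ^i f_i(x̂) = 0 and D^-_M f_0(x̂)(u) + Σ_{i=1}^m λ^i D^-_M f_i(x̂)(u) ≤ 0 for all u ∈ E. -/

import Mathlib

open Filter Topology

variable {E : Type*} [NormedAddCommGroup E] [NormedSpace ℝ E]

/-- Difference quotient of `f` at `x` in direction `u`. -/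
noncomputable def diniQuot (f : E → ℝ) (x u : E) : ℝ → ℝ :=
  fun t => (f (x + t • u) - f x) / t

/-- Lower Dini derivative `D⁻ f(x)(u)`. -/
noncomputable def lowerDini (f : E → ℝ) (x u : E) : ℝ :=
  liminf (diniQuot f x u) (𝓝[>] 0)

/-- Upper Dini derivative `D⁺ f(x)(u)`. -/
noncomputable def upperDini (f : E → ℝ) (x u : E) : ℝ :=
  limsup (diniQuot f x u) (𝓝[>] 0)

/-- Modified lower Dini derivative `D⁻_M f(x)(u)`. -/
noncomputable def lowerDiniM (f : E → ℝ) (x u : E) : ℝ :=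
  ⨅ w : E, (lowerDini f x (u + w) - lowerDini f x w)

/-- Modified upper Dini derivative `D⁺_M f(x)(u)`. -/
noncomputable def upperDiniM (f : E → ℝ) (x u : E) : ℝ :=
  ⨆ w : E, (upperDini f x (u + w) - upperDini f x w)

/-- The difference quotients of `f` at `x` in direction `u` are bounded near `0⁺`,
so that the lower/upper Dini derivatives are genuine (finite) values. -/
def DiniFinite (f : E → ℝ) (x u : E) : Prop :=
  IsBoundedUnder (· ≤ ·) (𝓝[>] (0:ℝ)) (diniQuot f x u) ∧
  IsBoundedUnder (· ≥ ·) (𝓝[>] (0:ℝ)) (diniQuot f x u)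

/-- Finiteness of the modified lower Dini derivative. -/
def LowerDiniMFinite (f : E → ℝ) (x u : E) : Prop :=
  BddBelow (Set.range fun w : E => lowerDini f x (u + w) - lowerDini f x w)

/-- Finiteness of the modified upper Dini derivative. -/
def UpperDiniMFinite (f : E → ℝ) (x u : E) : Prop :=
  BddAbove (Set.range fun w : E => upperDini f x (u + w) - upperDini f x w)

lemma lowerDini_zero (f : E → ℝ) (x : E) : lowerDini f x 0 = 0 := by
  have : diniQuot f x 0 = fun _ => (0:ℝ) := by
    funext t; simp [diniQuot]
  rw [lowerDini, this, liminf_const]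

lemma lowerDiniM_le_lowerDini (f : E → ℝ) (x u : E) (h : LowerDiniMFinite f x u) :
    lowerDiniM f x u ≤ lowerDini f x u := by
  have := ciInf_le h 0
  simpa [lowerDini_zero, lowerDiniM] using this

lemma lowerDiniM_superadd (f : E → ℝ) (x : E) (hM : ∀ u, LowerDiniMFinite f x u) (u v : E) :
    lowerDiniM f x u + lowerDiniM f x v ≤ lowerDiniM f x (u + v) := by
  simp only [lowerDiniM]
  apply le_ciInf
  intro w
  have h1 := ciInf_le (hM u) (v + w)
  have h2 := ciInf_le (hM v) w
  rw [show u + v + w = u + (v + w) from add_assoc u v w]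
  linarith

lemma map_mul_right_nhdsGT {t : ℝ} (ht : 0 < t) :
    Filter.map (fun s : ℝ => s * t) (𝓝[>] (0:ℝ)) = 𝓝[>] (0:ℝ) := by
  have he := (Homeomorph.mulRight₀ t ht.ne').isEmbedding
  have h2 : ⇑(Homeomorph.mulRight₀ t ht.ne') = (fun s : ℝ => s * t) :=
    Homeomorph.coe_mulRight₀ t ht.ne'
  have h3 := he.map_nhdsWithin_eq (Set.Ioi 0) 0
  rw [h2] at h3
  have h4 : (fun s : ℝ => s * t) 0 = 0 := zero_mul t
  rw [h3, h4]
  congr 1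
  ext y
  constructor
  · rintro ⟨s, hs, rfl⟩; exact mul_pos hs ht
  · intro hy; exact ⟨y / t, div_pos hy ht, div_mul_cancel₀ y ht.ne'⟩

lemma lowerDini_smul (f : E → ℝ) (x : E) (hfin : ∀ u, DiniFinite f x u) (u : E)
    {t : ℝ} (ht : 0 < t) : lowerDini f x (t • u) = t * lowerDini f x u := by
  have hquot : diniQuot f x (t • u) = (fun r : ℝ => t * diniQuot f x u r) ∘ (fun s : ℝ => s * t) := by
    funext s
    rcases eq_or_ne s 0 with rfl | hs
    · simp [diniQuot]
    · simp only [Function.comp_apply, diniQuot, smul_smul]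
      field_simp
  have hb1 : IsBoundedUnder (· ≥ ·) (𝓝[>] (0:ℝ)) (diniQuot f x u) := (hfin u).2
  have hco1 : IsCoboundedUnder (· ≥ ·) (𝓝[>] (0:ℝ)) (diniQuot f x u) :=
    (hfin u).1.isCoboundedUnder_ge
  have hb2 : IsBoundedUnder (· ≥ ·) (𝓝[>] (0:ℝ)) (fun r => t * diniQuot f x u r) := by
    obtain ⟨b, hb⟩ := hb1
    refine ⟨t * b, ?_⟩
    rw [eventually_map] at hb ⊢
    exact hb.mono fun s hs => mul_le_mul_of_nonneg_left hs ht.le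
  have hco2 : IsCoboundedUnder (· ≥ ·) (𝓝[>] (0:ℝ)) (fun r => t * diniQuot f x u r) := by
    refine IsBoundedUnder.isCoboundedUnder_ge ?_
    obtain ⟨b, hb⟩ := (hfin u).1
    refine ⟨t * b, ?_⟩
    rw [eventually_map] at hb ⊢
    exact hb.mono fun s hs => mul_le_mul_of_nonneg_left hs ht.le
  calc lowerDini f x (t • u)
      = liminf ((fun r : ℝ => t * diniQuot f x u r) ∘ (fun s : ℝ => s * t)) (𝓝[>] 0) := by
        rw [lowerDini, hquot]
    _ = liminf (fun r : ℝ => t * diniQuot f x u r) (𝓝[>] 0) := by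
        rw [liminf_comp, map_mul_right_nhdsGT ht]
    _ = t * lowerDini f x u := by
        rw [lowerDini]
        exact ((OrderIso.mulLeft₀ t ht).liminf_apply hb1 hco1 hb2 hco2).symm

lemma lowerDiniM_smul (f : E → ℝ) (x : E) (hfin : ∀ u, DiniFinite f x u) (u : E)
    {t : ℝ} (ht : 0 < t) : lowerDiniM f x (t • u) = t * lowerDiniM f x u := by
  have hre : ∀ w' : E, lowerDini f x (t • u + t • w') - lowerDini f x (t • w')
      = t * (lowerDini f x (u + w') - lowerDini f x w') := by
    intro w'
    rw [← smul_add, lowerDini_smul f x hfin _ ht, lowerDini_smul f x hfin _ ht]; ring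
  have e : E ≃ E := ⟨fun w => t • w, fun w => t⁻¹ • w,
    fun w => by simp [smul_smul, inv_mul_cancel₀ ht.ne'],
    fun w => by simp [smul_smul, mul_inv_cancel₀ ht.ne']⟩
  have hsurj : Function.Surjective (fun w : E => t • w) := fun w =>
    ⟨t⁻¹ • w, by simp [smul_smul, mul_inv_cancel₀ ht.ne']⟩
  calc lowerDiniM f x (t • u)
      = ⨅ w, (lowerDini f x (t • u + w) - lowerDini f x w) := rfl
    _ = ⨅ w', (lowerDini f x (t • u + t • w') - lowerDini f x (t • w')) := by
        rw [iInf, iInf]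
        exact congrArg sInf (hsurj.range_comp
          (fun w => lowerDini f x (t • u + w) - lowerDini f x w)).symm
    _ = ⨅ w', t * (lowerDini f x (u + w') - lowerDini f x w') := by
        exact congrArg iInf (funext hre)
    _ = t * lowerDiniM f x u := (Real.mul_iInf_of_nonneg ht.le _).symm

lemma lowerDiniM_concave (f : E → ℝ) (x : E) (hfin : ∀ u, DiniFinite f x u)
    (hM : ∀ u, LowerDiniMFinite f x u) {a b : ℝ} (ha : 0 ≤ a) (hb : 0 ≤ b) (hab : a + b = 1)
    (u v : E) : a * lowerDiniM f x u + b * lowerDiniM f x v ≤ lowerDiniM f x (a • u + b • v) := by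
  rcases ha.eq_or_lt with rfl | ha'
  · have hb1 : b = 1 := by linarith
    subst hb1; simp
  rcases hb.eq_or_lt with rfl | hb'
  · have ha1 : a = 1 := by linarith
    subst ha1; simp
  calc a * lowerDiniM f x u + b * lowerDiniM f x v
      = lowerDiniM f x (a • u) + lowerDiniM f x (b • v) := by
        rw [lowerDiniM_smul f x hfin u ha', lowerDiniM_smul f x hfin v hb']
    _ ≤ lowerDiniM f x (a • u + b • v) := lowerDiniM_superadd f x hM _ _

lemma lowerDini_pos_eventually (f : E → ℝ) (x u : E) (hfin : DiniFinite f x u)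
    (h : 0 < lowerDini f x u) : ∀ᶠ t in 𝓝[>] (0:ℝ), f x < f (x + t • u) := by
  have := eventually_lt_of_lt_liminf (u := diniQuot f x u) (f := 𝓝[>] (0:ℝ)) h hfin.2
  filter_upwards [this, self_mem_nhdsWithin] with t h1 h2
  have ht : (0:ℝ) < t := h2
  have h3 : 0 < (f (x + t • u) - f x) / t := h1
  rcases div_pos_iff.mp h3 with ⟨hn, _⟩ | ⟨_, hneg⟩
  · linarith
  · linarith

lemma no_ascent (m : ℕ) (Ω : Set E) (hΩ : IsOpen Ω)
    (f : Fin (m + 1) → E → ℝ) (xh : E) (hx : xh ∈ Ω)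
    (hfeas : ∀ i : Fin (m + 1), i ≠ 0 → 0 ≤ f i xh)
    (hmax : ∀ x ∈ Ω, (∀ i : Fin (m + 1), i ≠ 0 → 0 ≤ f i x) → f 0 x ≤ f 0 xh)
    (hlsc : ∀ i : Fin (m + 1), i ≠ 0 → 0 < f i xh → LowerSemicontinuousAt (f i) xh)
    (hfin : ∀ i u, DiniFinite (f i) xh u)
    (hMfin : ∀ i u, LowerDiniMFinite (f i) xh u) :
    ¬ ∃ v : E, ∀ i : Fin (m + 1), (i = 0 ∨ f i xh = 0) → 0 < lowerDiniM (f i) xh v := by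
  rintro ⟨v, hv⟩
  have htend : Tendsto (fun t : ℝ => xh + t • v) (𝓝[>] (0:ℝ)) (𝓝 xh) := by
    have hc : Continuous (fun t : ℝ => xh + t • v) := by continuity
    have h0 : Tendsto (fun t : ℝ => xh + t • v) (𝓝 0) (𝓝 xh) := by
      have := hc.tendsto 0
      simpa using this
    exact h0.mono_left nhdsWithin_le_nhds
  have hΩev : ∀ᶠ t in 𝓝[>] (0:ℝ), xh + t • v ∈ Ω := htend.eventually (hΩ.mem_nhds hx)
  have hi : ∀ i : Fin (m+1), ∀ᶠ t in 𝓝[>] (0:ℝ),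
      (i ≠ 0 → 0 < f i (xh + t • v)) ∧ (i = 0 → f 0 xh < f 0 (xh + t • v)) := by
    intro i
    by_cases hS : i = 0 ∨ f i xh = 0
    · have h1 : 0 < lowerDini (f i) xh v :=
        lt_of_lt_of_le (hv i hS) (lowerDiniM_le_lowerDini _ _ _ (hMfin i v))
      have h2 := lowerDini_pos_eventually (f i) xh v (hfin i v) h1
      filter_upwards [h2] with t ht
      constructor
      · intro hne
        have h0 : f i xh = 0 := hS.resolve_left hne
        rw [h0] at ht
        exact ht
      · intro h0
        subst h0
        exact ht
    · push_neg at hS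
      obtain ⟨hne, hfne⟩ := hS
      have hpos : 0 < f i xh := lt_of_le_of_ne (hfeas i hne) (Ne.symm hfne)
      have hev := htend.eventually (hlsc i hne hpos 0 hpos)
      filter_upwards [hev] with t ht
      exact ⟨fun _ => ht, fun h0 => absurd h0 hne⟩
  have hall := (Filter.eventually_all.mpr hi).and hΩev
  obtain ⟨t, hP, hΩt⟩ := hall.exists
  have hfeas' : ∀ i : Fin (m+1), i ≠ 0 → 0 ≤ f i (xh + t • v) := fun i hne => ((hP i).1 hne).le
  have h1 := hmax _ hΩt hfeas'
  have h2 := (hP 0).2 rfl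
  linarith

/-- Karush–Kuhn–Tucker form: under the hypotheses of the
John-type theorem, if moreover there is a direction `w` with
`D⁻_M f_i(xh)(w) > 0` for every active constraint `i` (Slater-type condition),
then the multipliers can be chosen with `lam 0 = 1`. -/
theorem kkt_dini (m : ℕ) (Ω : Set E) (hΩ : IsOpen Ω) (hΩne : Ω.Nonempty)
    (f : Fin (m + 1) → E → ℝ) (xh : E) (hx : xh ∈ Ω)
    (hfeas : ∀ i : Fin (m + 1), i ≠ 0 → 0 ≤ f i xh)
    (hmax : ∀ x ∈ Ω, (∀ i : Fin (m + 1), i ≠ 0 → 0 ≤ f i x) → f 0 x ≤ f 0 xh)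
    (hlsc : ∀ i : Fin (m + 1), i ≠ 0 → 0 < f i xh → LowerSemicontinuousAt (f i) xh)
    (hfin : ∀ i u, DiniFinite (f i) xh u)
    (hMfin : ∀ i u, LowerDiniMFinite (f i) xh u)
    (hslater : ∃ w : E, ∀ i : Fin (m + 1), i ≠ 0 → f i xh = 0 →
      0 < lowerDiniM (f i) xh w) :
    ∃ lam : Fin (m + 1) → ℝ,
      lam 0 = 1 ∧ (∀ i, 0 ≤ lam i) ∧
      (∀ i : Fin (m + 1), i ≠ 0 → lam i * f i xh = 0) ∧
      ∀ u : E, ∑ i, lam i * lowerDiniM (f i) xh u ≤ 0 := by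
  classical
  obtain ⟨w, hw⟩ := hslater
  have hA := no_ascent m Ω hΩ f xh hx hfeas hmax hlsc hfin hMfin
  set S : Fin (m+1) → Prop := fun i => i = 0 ∨ f i xh = 0 with hSdef
  set φ : Fin (m+1) → E → ℝ := fun i v => lowerDiniM (f i) xh v with hφdef
  set O : Set (Fin (m+1) → ℝ) := {y | ∀ i, 0 < y i} with hOdef
  set C : Set (Fin (m+1) → ℝ) := {y | ∃ v : E, ∀ i, S i → y i ≤ φ i v} with hCdef
  have hOopen : IsOpen O := by
    have hrw : O = ⋂ i, (fun y : Fin (m+1) → ℝ => y i) ⁻¹' Set.Ioi 0 := by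
      ext y; simp [hOdef, Set.mem_iInter]
    rw [hrw]
    exact isOpen_iInter_of_finite fun i => isOpen_Ioi.preimage (continuous_apply i)
  have hOconv : Convex ℝ O := by
    intro y hy z hz a b ha hb hab
    intro i
    simp only [Pi.add_apply, Pi.smul_apply, smul_eq_mul]
    rcases ha.eq_or_lt with rfl | ha'
    · have hb1 : b = 1 := by linarith
      subst hb1; simpa using hz i
    · nlinarith [hy i, hz i, mul_pos ha' (hy i), mul_nonneg hb (hz i).le]
  have hCconv : Convex ℝ C := by
    rintro y ⟨vy, hvy⟩ z ⟨vz, hvz⟩ a b ha hb hab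
    refine ⟨a • vy + b • vz, fun i hi => ?_⟩
    have h1 := lowerDiniM_concave (f i) xh (hfin i) (hMfin i) ha hb hab vy vz
    have h2 : a * y i ≤ a * φ i vy := mul_le_mul_of_nonneg_left (hvy i hi) ha
    have h3 : b * z i ≤ b * φ i vz := mul_le_mul_of_nonneg_left (hvz i hi) hb
    simp only [Pi.add_apply, Pi.smul_apply, smul_eq_mul]
    calc a * y i + b * z i ≤ a * φ i vy + b * φ i vz := by linarith
      _ ≤ φ i (a • vy + b • vz) := h1
  have hdisj : Disjoint O C := by
    rw [Set.disjoint_left]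
    rintro y hyO ⟨v, hv⟩
    exact hA ⟨v, fun i hi => lt_of_lt_of_le (hyO i) (hv i hi)⟩
  obtain ⟨F, u0, hFO, hFC⟩ := geometric_hahn_banach_open hOconv hOopen hCconv hdisj
  set μ : Fin (m+1) → ℝ := fun i => -(F (Pi.single i 1)) with hμdef
  set ones : Fin (m+1) → ℝ := fun _ => 1 with honesdef
  have hones_mem : ones ∈ O := fun i => one_pos
  have hFdec : ∀ y : Fin (m+1) → ℝ, F y = -∑ i, y i * μ i := by
    intro y
    have h := LinearMap.pi_apply_eq_sum_univ
      (F.toLinearMap : (Fin (m+1) → ℝ) →ₗ[ℝ] ℝ) y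
    have h2 : ∀ i : Fin (m+1),
        (fun j => if i = j then (1:ℝ) else 0) = Pi.single i 1 := by
      intro i; funext j; simp [Pi.single_apply, eq_comm]
    calc F y = ∑ i, y i • F.toLinearMap (fun j => if i = j then (1:ℝ) else 0) := h
      _ = ∑ i, -(y i * μ i) := by
          apply Finset.sum_congr rfl
          intro i _
          rw [h2 i]
          simp only [hμdef, smul_eq_mul]
          have : F.toLinearMap (Pi.single i 1) = F (Pi.single i 1) := rfl
          rw [this]; ring
      _ = -∑ i, y i * μ i := by rw [Finset.sum_neg_distrib]
  have hu0 : 0 ≤ u0 := by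
    by_contra hneg
    push_neg at hneg
    have h1 : ∀ ε : ℝ, 0 < ε → ε * F ones < u0 := by
      intro ε hε
      have hm : (ε • ones) ∈ O := by
        intro i
        simp only [Pi.smul_apply, smul_eq_mul, honesdef]
        linarith
      have := hFO _ hm
      rwa [map_smul, smul_eq_mul] at this
    have hF1 := h1 1 one_pos
    rw [one_mul] at hF1
    have hFneg : F ones < 0 := by linarith
    have hεpos : 0 < u0 / (2 * F ones) := div_pos_of_neg_of_neg hneg (by linarith)
    have h3 := h1 _ hεpos
    have hFne : F ones ≠ 0 := ne_of_lt hFneg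
    have h4 : u0 / (2 * F ones) * F ones = u0 / 2 := by
      field_simp
    rw [h4] at h3
    linarith
  have hμnn : ∀ i, 0 ≤ μ i := by
    intro i
    by_contra hneg
    push_neg at hneg
    have hFs : 0 < F (Pi.single i 1) := by
      have : μ i = -(F (Pi.single i 1)) := rfl
      linarith [this ▸ hneg]
    have hmem : ∀ n : ℝ, 0 < n → (n • (Pi.single i 1 : Fin (m+1) → ℝ) + ones) ∈ O := by
      intro n hn j
      simp only [Pi.add_apply, Pi.smul_apply, smul_eq_mul, honesdef]
      rcases eq_or_ne j i with rfl | hji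
      · simp only [Pi.single_eq_same]
        linarith
      · simp [Pi.single_apply, hji]
    have hlt : ∀ n : ℝ, 0 < n → n * F (Pi.single i 1) + F ones < u0 := by
      intro n hn
      have := hFO _ (hmem n hn)
      rwa [map_add, map_smul, smul_eq_mul] at this
    set n := max 1 ((u0 - F ones) / F (Pi.single i 1)) with hndef
    have hnpos : (0:ℝ) < n := lt_of_lt_of_le one_pos (le_max_left _ _)
    have h2 := hlt n hnpos
    have h3 : (u0 - F ones) / F (Pi.single i 1) ≤ n := le_max_right _ _
    have h4 : u0 - F ones ≤ n * F (Pi.single i 1) := by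
      rw [div_le_iff₀ hFs] at h3; linarith
    linarith
  have hoffS : ∀ i0, ¬ S i0 → μ i0 = 0 := by
    intro i0 hi0
    by_contra hne
    have hpos : 0 < μ i0 := (hμnn i0).lt_of_ne (Ne.symm hne)
    have hmem : ∀ R : ℝ, ((fun i => if S i then φ i 0 else 0) + R • (Pi.single i0 1 : Fin (m+1) → ℝ)) ∈ C := by
      intro R
      refine ⟨0, fun i hi => ?_⟩
      have hii0 : i ≠ i0 := fun h => hi0 (h ▸ hi)
      simp [Pi.single_apply, hii0, hi]
    have hlt : ∀ R : ℝ, u0 ≤ F (fun i => if S i then φ i 0 else 0) - R * μ i0 := by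
      intro R
      have h1 := hFC _ (hmem R)
      rw [map_add, map_smul, smul_eq_mul] at h1
      have h2 : F (Pi.single i0 1) = -μ i0 := by simp [hμdef]
      rw [h2] at h1
      linarith
    have h5 := hlt ((F (fun i => if S i then φ i 0 else 0) - u0 + 1) / μ i0)
    rw [div_mul_cancel₀ _ hpos.ne'] at h5
    linarith
  have hsum : ∀ v : E, ∑ i, μ i * φ i v ≤ 0 := by
    intro v
    have hmem : (fun i => if S i then φ i v else 0) ∈ C := ⟨v, fun i hi => by simp [hi]⟩
    have h1 := hFC _ hmem
    rw [hFdec] at h1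
    have h2 : ∑ i, (if S i then φ i v else 0) * μ i = ∑ i, μ i * φ i v := by
      apply Finset.sum_congr rfl
      intro i _
      by_cases hi : S i
      · rw [if_pos hi]; ring
      · rw [if_neg hi, hoffS i hi]; ring
    linarith
  have hμne : ¬ ∀ i, μ i = 0 := by
    intro hall
    have h1 : F ones < u0 := hFO _ hones_mem
    have h2 : u0 ≤ F (fun i => if S i then φ i 0 else 0) :=
      hFC _ ⟨0, fun i hi => by simp [hi]⟩
    rw [hFdec] at h1 h2
    simp only [hall, mul_zero, Finset.sum_const_zero, neg_zero] at h1 h2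
    linarith
  have hμ0 : 0 < μ 0 := by
    rcases (hμnn 0).lt_or_eq with h | h
    · exact h
    exfalso
    apply hμne
    have hsw := hsum w
    have hterm : ∀ i ∈ Finset.univ, 0 ≤ μ i * φ i w := by
      intro i _
      by_cases hi : S i
      · rcases eq_or_ne i 0 with rfl | hne
        · rw [← h]; simp
        · have hact : f i xh = 0 := hi.resolve_left hne
          exact mul_nonneg (hμnn i) (hw i hne hact).le
      · rw [hoffS i hi]; simp
    have hzero := (Finset.sum_eq_zero_iff_of_nonneg hterm).mp
      (le_antisymm hsw (Finset.sum_nonneg hterm))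
    intro i
    by_cases hi : S i
    · rcases eq_or_ne i 0 with rfl | hne
      · exact h.symm
      · have hact : f i xh = 0 := hi.resolve_left hne
        have hz := hzero i (Finset.mem_univ i)
        have hφpos := hw i hne hact
        rcases mul_eq_zero.mp hz with h' | h'
        · exact h'
        · exact absurd h' hφpos.ne'
    · exact hoffS i hi
  refine ⟨fun i => μ i / μ 0, div_self hμ0.ne', fun i => div_nonneg (hμnn i) hμ0.le, ?_, ?_⟩
  · intro i hne
    by_cases hf0 : f i xh = 0
    · rw [hf0, mul_zero]
    · have hz : μ i = 0 := hoffS i (by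
        intro hcase
        rcases hcase with h' | h'
        · exact hne h'
        · exact hf0 h')
      show μ i / μ 0 * f i xh = 0
      rw [hz]; simp
  · intro u
    have h1 := hsum u
    have heq : ∑ i, μ i / μ 0 * lowerDiniM (f i) xh u
        = (∑ i, μ i * lowerDiniM (f i) xh u) / μ 0 := by
      rw [Finset.sum_div]
      apply Finset.sum_congr rfl
      intro i _
      ring
    rw [heq]
    have h2 : ∑ i, μ i * lowerDiniM (f i) xh u ≤ 0 := h1
    exact div_nonpos_iff.mpr (Or.inr ⟨h2, hμ0.le⟩)
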